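/- (Margulis–Russo formula) Let n be a positive integer and f : {0,1}^n → {0,1} an increasing function. For every p ∈ (0,1), the map q ↦ μ_q(f) := ∫ f dμ_q^n is differentiable at p and 2 p (1 − p) · (d/dp) μ_p(f) = I_f, where I_f is the total influence of f computed with respect to the p-biased measure μ_p^n. -/

import Mathlib

open MeasureTheory

/-- The influence of the `j`-th variable on `f : Xⁿ → {0,1}`:
the probability that resampling the `j`-th coordinate changes the value of `f`. -/
noncomputable def influence {Ω : Type*} [MeasurableSpace Ω] (μ : Measure Ω) (n : ℕ)
    (f : (Fin n → Ω) → Bool) (j : Fin n) : ℝ :=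
  (((Measure.pi fun _ : Fin n => μ).prod μ)
    {p : (Fin n → Ω) × Ω | f p.1 ≠ f (Function.update p.1 j p.2)}).toReal

/-- The total influence `I_f = Σ_j I_f(j)`. -/
noncomputable def totalInfluence {Ω : Type*} [MeasurableSpace Ω] (μ : Measure Ω) (n : ℕ)
    (f : (Fin n → Ω) → Bool) : ℝ :=
  ∑ j : Fin n, influence μ n f j

/-- The `p`-biased Bernoulli measure on `{0,1}`: `μ_p({1}) = p`, `μ_p({0}) = 1 - p`. -/
noncomputable def bern (p : ℝ) : Measure Bool :=
  ENNReal.ofReal p • Measure.dirac true + ENNReal.ofReal (1 - p) • Measure.dirac false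

open Finset

lemma bern_singleton (q : ℝ) (b : Bool) :
    bern q {b} = ENNReal.ofReal (if b then q else 1 - q) := by
  cases b <;> simp [bern, Measure.dirac_apply]

lemma bern_prob {q : ℝ} (h0 : 0 ≤ q) (h1 : q ≤ 1) : IsProbabilityMeasure (bern q) := by
  constructor
  have : (Set.univ : Set Bool) = {true} ∪ {false} := by ext b; cases b <;> simp
  rw [this, measure_union (by simp) (by simp), bern_singleton, bern_singleton]
  norm_num
  rw [← ENNReal.ofReal_add h0 (by linarith)]
  norm_num

instance (q : ℝ) : IsFiniteMeasure (bern q) := by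
  constructor
  simp [bern]

lemma pi_bern_singleton (n : ℕ) (q : ℝ) (x : Fin n → Bool) :
    (Measure.pi fun _ : Fin n => bern q) {x} = ∏ i, ENNReal.ofReal (if x i then q else 1 - q) := by
  rw [← Set.univ_pi_singleton x, Measure.pi_pi]
  simp [bern_singleton]

lemma integral_pi_bern (n : ℕ) (f : (Fin n → Bool) → Bool) {q : ℝ} (h0 : 0 ≤ q) (h1 : q ≤ 1) :
    ∫ x, (if f x then (1:ℝ) else 0) ∂(Measure.pi fun _ : Fin n => bern q)
      = ∑ x : Fin n → Bool, (∏ i, (if x i then q else 1 - q)) * (if f x then (1:ℝ) else 0) := by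
  haveI := bern_prob h0 h1
  rw [integral_fintype (Integrable.of_finite)]
  refine Finset.sum_congr rfl fun x _ => ?_
  rw [Measure.real_def, pi_bern_singleton, ENNReal.toReal_prod, smul_eq_mul]
  congr 1
  exact Finset.prod_congr rfl fun i _ =>
    ENNReal.toReal_ofReal (by by_cases h : x i <;> simp [h] <;> linarith)

lemma hasDerivAt_wsum (n : ℕ) (f : (Fin n → Bool) → Bool) (p : ℝ) :
    HasDerivAt (fun q : ℝ => ∑ x : Fin n → Bool,
        (∏ i, (if x i then q else 1 - q)) * (if f x then (1:ℝ) else 0))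
      (∑ x : Fin n → Bool, (∑ j, (∏ i ∈ Finset.univ.erase j,
          (if x i then p else 1 - p)) * (if x j then (1:ℝ) else -1)) *
          (if f x then (1:ℝ) else 0)) p := by
  apply HasDerivAt.fun_sum
  intro x _
  apply HasDerivAt.mul_const
  have h := HasDerivAt.finset_prod (u := Finset.univ) (x := p)
    (f := fun i q => if x i then q else 1 - q) (f' := fun i => if x i then (1:ℝ) else -1) ?_
  · convert h using 1 <;> simp [smul_eq_mul, Finset.prod_fn]
  · intro i _
    by_cases h : x i
    · simpa [h] using hasDerivAt_id' p
    · simpa [h] using (hasDerivAt_id p).const_sub 1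

lemma influence_eq_sum (n : ℕ) (f : (Fin n → Bool) → Bool) {p : ℝ}
    (h0 : 0 ≤ p) (h1 : p ≤ 1) (j : Fin n) :
    influence (bern p) n f j = ∑ x : Fin n → Bool, ∑ b : Bool,
      (∏ i, (if x i then p else 1 - p)) * (if b then p else 1 - p) *
        (if f x ≠ f (Function.update x j b) then (1:ℝ) else 0) := by
  classical
  haveI := bern_prob h0 h1
  set μ := ((Measure.pi fun _ : Fin n => bern p).prod (bern p)) with hμ
  set S := {q : (Fin n → Bool) × Bool | f q.1 ≠ f (Function.update q.1 j q.2)} with hS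
  have hsum : μ S = ∑ a ∈ S.toFinset, μ {a} := by
    have h := sum_measure_preimage_singleton (μ := μ) S.toFinset (f := id)
      (fun y _ => by simpa using measurableSet_singleton y)
    simp only [Set.preimage_id, Set.coe_toFinset] at h
    exact h.symm
  have hpt : ∀ a : (Fin n → Bool) × Bool, (μ {a}).toReal =
      (∏ i, (if a.1 i then p else 1 - p)) * (if a.2 then p else 1 - p) := by
    rintro ⟨x, b⟩
    rw [hμ, show ({(x, b)} : Set ((Fin n → Bool) × Bool)) = {x} ×ˢ {b} by
        rw [Set.singleton_prod_singleton], Measure.prod_prod, pi_bern_singleton,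
      bern_singleton, ENNReal.toReal_mul, ENNReal.toReal_prod]
    congr 1
    · exact Finset.prod_congr rfl fun i _ =>
        ENNReal.toReal_ofReal (by by_cases h : x i <;> simp [h] <;> linarith)
    · exact ENNReal.toReal_ofReal (by by_cases h : b <;> simp [h] <;> linarith)
  rw [influence, ← hμ, ← hS, hsum, ENNReal.toReal_sum (fun a _ => measure_ne_top μ _)]
  have hext : ∑ a ∈ S.toFinset, (μ {a}).toReal
      = ∑ a : (Fin n → Bool) × Bool, if a ∈ S.toFinset then (μ {a}).toReal else 0 := by
    rw [Finset.sum_ite_mem, Finset.univ_inter]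
  rw [hext, Fintype.sum_prod_type]
  refine Finset.sum_congr rfl fun x _ => Finset.sum_congr rfl fun b _ => ?_
  by_cases h : f x ≠ f (Function.update x j b)
  · have hm : (x, b) ∈ S.toFinset := by simp only [Set.mem_toFinset]; exact h
    rw [if_pos hm, if_pos h, hpt, mul_one]
  · have hm : (x, b) ∉ S.toFinset := by simp only [Set.mem_toFinset]; exact h
    rw [if_neg hm, if_neg h, mul_zero]

set_option maxHeartbeats 1000000 in
lemma key_identity (n : ℕ) (f : (Fin n → Bool) → Bool)
    (hmono : ∀ x y : Fin n → Bool, (∀ i, x i ≤ y i) → f x ≤ f y)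
    (p : ℝ) (j : Fin n) :
    ∑ x : Fin n → Bool, ∑ b : Bool,
      (∏ i, (if x i then p else 1 - p)) * (if b then p else 1 - p) *
        (if f x ≠ f (Function.update x j b) then (1:ℝ) else 0)
    = 2 * p * (1 - p) * ∑ x : Fin n → Bool,
        (∏ i ∈ Finset.univ.erase j, (if x i then p else 1 - p)) *
          (if x j then (1:ℝ) else -1) * (if f x then (1:ℝ) else 0) := by
  classical
  set P : (Fin n → Bool) → ℝ := fun x => ∏ i ∈ Finset.univ.erase j, (if x i then p else 1 - p)
    with hP
  set σ : (Fin n → Bool) → (Fin n → Bool) := fun x => Function.update x j (!(x j)) with hσ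
  have hinv : Function.Involutive σ := by
    intro x
    simp [hσ, Function.update_idem, Function.update_self, Bool.not_not,
      Function.update_eq_self]
  have hPσ : ∀ x, P (σ x) = P x := by
    intro x
    refine Finset.prod_congr rfl fun i hi => ?_
    simp [hσ, Function.update_of_ne (Finset.ne_of_mem_erase hi)]
  have hmono' : ∀ x : Fin n → Bool,
      f (Function.update x j false) ≤ f (Function.update x j true) := by
    intro x
    refine hmono _ _ fun i => ?_
    by_cases hij : i = j
    · subst hij; simp
    · simp [Function.update_of_ne hij]
  have hstep2 : 2 * ∑ x : Fin n → Bool, P x * (if x j then (1:ℝ) else -1) *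
      (if f x then (1:ℝ) else 0)
      = ∑ x : Fin n → Bool,
        (if f (Function.update x j false) ≠ f (Function.update x j true) then (1:ℝ) else 0)
          * P x := by
    have hbij := Fintype.sum_bijective σ hinv.bijective
      (fun x => P (σ x) * (if (σ x) j then (1:ℝ) else -1) * (if f (σ x) then (1:ℝ) else 0))
      (fun x => P x * (if x j then (1:ℝ) else -1) * (if f x then (1:ℝ) else 0))
      (fun x => rfl)
    rw [two_mul]
    nth_rewrite 1 [← hbij]
    rw [← Finset.sum_add_distrib]
    refine Finset.sum_congr rfl fun x _ => ?_
    have hσj : (σ x) j = !(x j) := by rw [hσ]; simp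
    rcases hx : x j with _ | _
    · -- x j = false
      have hxeq : x = Function.update x j false := by
        conv_lhs => rw [← Function.update_eq_self j x]
        rw [hx]
      have hσeq : σ x = Function.update x j true := by rw [hσ]; simp [hx]
      have hle := hmono' x
      rw [hPσ, hσj, hx, hσeq, ← hxeq] at *
      rcases hf0 : f x <;> rcases hf1 : f (Function.update x j true) <;>
        simp_all [Bool.le_iff_imp] <;> ring
    · -- x j = true
      have hxeq : x = Function.update x j true := by
        conv_lhs => rw [← Function.update_eq_self j x]
        rw [hx]
      have hσeq : σ x = Function.update x j false := by rw [hσ]; simp [hx]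
      have hle := hmono' x
      rw [hPσ, hσj, hx, hσeq, ← hxeq] at *
      rcases hf0 : f x <;> rcases hf1 : f (Function.update x j false) <;>
        simp_all [Bool.le_iff_imp] <;> ring
  have hstep1 : ∑ x : Fin n → Bool, ∑ b : Bool,
      (∏ i, (if x i then p else 1 - p)) * (if b then p else 1 - p) *
        (if f x ≠ f (Function.update x j b) then (1:ℝ) else 0)
      = p * (1 - p) * ∑ x : Fin n → Bool,
        (if f (Function.update x j false) ≠ f (Function.update x j true) then (1:ℝ) else 0)
          * P x := by
    clear hstep2
    rw [Finset.mul_sum]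
    refine Finset.sum_congr rfl fun x _ => ?_
    rw [Fintype.sum_bool]
    have hW : (∏ i, (if x i then p else 1 - p))
        = (if x j then p else 1 - p) * P x := by
      rw [hP]
      exact (Finset.mul_prod_erase Finset.univ _ (Finset.mem_univ j)).symm
    rcases hx : x j with _ | _
    · have hxeq : Function.update x j false = x := by
        conv_rhs => rw [← Function.update_eq_self j x]
        rw [hx]
      rw [hW, hx, hxeq]
      rcases hf0 : f x <;> rcases hf1 : f (Function.update x j true) <;>
        simp [hf0, hf1] <;> ring
    · have hxeq : Function.update x j true = x := by
        conv_rhs => rw [← Function.update_eq_self j x]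
        rw [hx]
      rw [hW, hx, hxeq]
      rcases hf0 : f x <;> rcases hf1 : f (Function.update x j false) <;>
        simp [hf0, hf1] <;> ring
  rw [hstep1, ← hstep2]
  ring


/-- **Margulis–Russo formula.** For an increasing `f : {0,1}ⁿ → {0,1}` and `p ∈ (0,1)`, the
map `q ↦ μ_q(f) = ∫ f dμ_qⁿ` is differentiable at `p`, and its derivative `D` there satisfies
`2p(1-p)·D = I_f`, where `I_f` is computed with respect to `μ_pⁿ`. -/
theorem margulis_russo (n : ℕ) (hn : 0 < n) (f : (Fin n → Bool) → Bool)
    (hmono : ∀ x y : Fin n → Bool, (∀ i, x i ≤ y i) → f x ≤ f y)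
    (p : ℝ) (hp : 0 < p) (hp1 : p < 1) :
    ∃ D : ℝ,
      HasDerivAt (fun q : ℝ =>
          ∫ x, (if f x then (1 : ℝ) else 0) ∂(Measure.pi fun _ : Fin n => bern q)) D p ∧
      2 * p * (1 - p) * D = totalInfluence (bern p) n f := by
  classical
  set D : ℝ := ∑ x : Fin n → Bool, (∑ j, (∏ i ∈ Finset.univ.erase j,
      (if x i then p else 1 - p)) * (if x j then (1:ℝ) else -1)) *
      (if f x then (1:ℝ) else 0) with hD
  refine ⟨D, ?_, ?_⟩
  · have hg := hasDerivAt_wsum n f p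
    refine hg.congr_of_eventuallyEq ?_
    filter_upwards [Ioo_mem_nhds hp hp1] with q hq
    exact integral_pi_bern n f hq.1.le hq.2.le
  · have h1 : ∀ j : Fin n, influence (bern p) n f j
        = 2 * p * (1 - p) * ∑ x : Fin n → Bool,
            (∏ i ∈ Finset.univ.erase j, (if x i then p else 1 - p)) *
              (if x j then (1:ℝ) else -1) * (if f x then (1:ℝ) else 0) := fun j => by
      rw [influence_eq_sum n f hp.le hp1.le j, key_identity n f hmono p j]
    have hsuff : D = ∑ j : Fin n, ∑ x : Fin n → Bool,
        (∏ i ∈ Finset.univ.erase j, (if x i then p else 1 - p)) *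
          (if x j then (1:ℝ) else -1) * (if f x then (1:ℝ) else 0) := by
      rw [hD]
      rw [Finset.sum_comm]
      refine Finset.sum_congr rfl fun x _ => ?_
      rw [Finset.sum_mul]
    rw [totalInfluence, hsuff, Finset.mul_sum]
    exact Finset.sum_congr rfl fun j _ => (h1 j).symm
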